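/- Let 𝒜 be a finite category with objects a_1, …, a_m, and for each n ∈ ℕ let c_n be the number of chains x_0 →^{φ_1} x_1 → ⋯ →^{φ_n} x_n of n composable arrows in 𝒜 with no φ_k an identity (i.e., the number of nondegenerate n-simplices of the nerve of 𝒜). Then the formal power series f_𝒜(t) = ∑_{n∈ℕ} c_n tⁿ ∈ ℚ⟦t⟧ is rational: det(I − (Z_𝒜 − I)·t) · f_𝒜(t) = s(adj(I − (Z_𝒜 − I)·t)) in ℚ⟦t⟧, and det(I − (Z_𝒜 − I)·t) is a polynomial with constant term 1, hence nonzero. -/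

import Mathlib

open CategoryTheory Matrix Polynomial

/-- The sum of all entries of a square matrix. -/
def matS {ι R : Type*} [Fintype ι] [CommRing R] (M : Matrix ι ι R) : R :=
  ∑ i, ∑ j, M i j

/-- A chain `x = x_0 → x_1 → ⋯ → x_n = y` of `n` composable arrows in a category
structure on `Fin m`, none of which is an identity arrow (i.e. a nondegenerate
`n`-simplex of the nerve from `x` to `y`). -/
structure NondegChain (m : ℕ) [Category (Fin m)] (n : ℕ) (x y : Fin m) where
  obj : Fin (n + 1) → Fin m
  hom : ∀ k : Fin n, obj k.castSucc ⟶ obj k.succ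
  src : obj 0 = x
  tgt : obj (Fin.last n) = y
  nondeg : ∀ k : Fin n, ¬ ∃ h : obj k.castSucc = obj k.succ, hom k = eqToHom h

section Key

variable {ι : Type*} [Fintype ι] [DecidableEq ι]

lemma key_det_coeff (N : Matrix ι ι ℚ) :
    ((1 : Matrix ι ι ℚ[X]) - (X : ℚ[X]) • N.map C).det.coeff 0 = 1 := by
  rw [Polynomial.coeff_zero_eq_eval_zero, ← Polynomial.coe_evalRingHom,
    RingHom.map_det]
  have h2 : (Polynomial.evalRingHom (0 : ℚ)).mapMatrix
      ((1 : Matrix ι ι ℚ[X]) - (X : ℚ[X]) • N.map C) = 1 := by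
    ext i j
    simp [Matrix.one_apply, Matrix.sub_apply, Matrix.smul_apply, smul_eq_mul, apply_ite]
  rw [h2, Matrix.det_one]

lemma key_main (N : Matrix ι ι ℚ) :
    ((((1 : Matrix ι ι ℚ[X]) - (X : ℚ[X]) • N.map C).det : ℚ[X]) : PowerSeries ℚ) *
        PowerSeries.mk (fun n => ∑ i, ∑ j, (N ^ n) i j) =
      ((matS (((1 : Matrix ι ι ℚ[X]) - (X : ℚ[X]) • N.map C).adjugate) : ℚ[X]) :
        PowerSeries ℚ) := by
  set M : Matrix ι ι ℚ[X] := (1 : Matrix ι ι ℚ[X]) - (X : ℚ[X]) • N.map C with hM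
  set φ : ℚ[X] →+* PowerSeries ℚ := Polynomial.coeToPowerSeries.ringHom with hφ
  have hφ' : ∀ p : ℚ[X], φ p = (p : PowerSeries ℚ) := fun p => rfl
  set A : Matrix ι ι (PowerSeries ℚ) := φ.mapMatrix M with hA
  set S : Matrix ι ι (PowerSeries ℚ) :=
    Matrix.of fun i j => PowerSeries.mk fun n => (N ^ n) i j with hS
  have hAentry : ∀ i j, A i j =
      (if i = j then 1 else 0) - PowerSeries.X * PowerSeries.C (N i j) := by
    intro i j
    simp only [hA, RingHom.mapMatrix_apply, Matrix.map_apply, hM, Matrix.sub_apply,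
      Matrix.one_apply, Matrix.smul_apply, smul_eq_mul]
    rw [map_sub, _root_.map_mul]
    congr 1
    · split <;> simp [hφ']
    · rw [hφ', hφ']
      simp [Polynomial.coe_C]
  have hAS : A * S = 1 := by
    ext i j n
    rw [Matrix.mul_apply]
    have hterm : ∀ k, A i k * S k j =
        (if i = k then 1 else 0) * S k j -
          PowerSeries.X * (PowerSeries.C (N i k) * S k j) := by
      intro k
      rw [hAentry i k]
      ring
    simp only [hterm, Finset.sum_sub_distrib, ← Finset.mul_sum, ite_mul, one_mul, zero_mul]
    rw [Finset.sum_ite_eq (Finset.univ : Finset ι) i (fun k => S k j)]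
    simp only [Finset.mem_univ, if_pos, one_mul]
    have hsum : ∀ nn : ℕ, (PowerSeries.coeff nn) (∑ k, PowerSeries.C (N i k) * S k j)
        = (N ^ (nn + 1)) i j := by
      intro nn
      rw [map_sum, pow_succ', Matrix.mul_apply]
      refine Finset.sum_congr rfl fun k _ => ?_
      simp [hS, PowerSeries.coeff_C_mul]
    rw [map_sub]
    cases n with
    | zero =>
      have hx : (PowerSeries.coeff 0) (PowerSeries.X *
          (∑ k, PowerSeries.C (N i k) * S k j)) = 0 := by
        rw [PowerSeries.coeff_zero_eq_constantCoeff, _root_.map_mul]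
        simp
      rw [hx]
      simp [hS, Matrix.one_apply, apply_ite (PowerSeries.coeff 0)]
    | succ n =>
      rw [PowerSeries.coeff_succ_X_mul, hsum]
      simp [hS, Matrix.one_apply, apply_ite (PowerSeries.coeff (n + 1))]
  have hadj : A.adjugate = φ M.det • S := by
    calc A.adjugate = A.adjugate * (A * S) := by rw [hAS, mul_one]
    _ = (A.adjugate * A) * S := by rw [Matrix.mul_assoc]
    _ = (A.det • (1 : Matrix ι ι (PowerSeries ℚ))) * S := by rw [Matrix.adjugate_mul]
    _ = A.det • S := by rw [Matrix.smul_mul, Matrix.one_mul]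
    _ = φ M.det • S := by rw [RingHom.map_det]
  have hms : ((matS M.adjugate : ℚ[X]) : PowerSeries ℚ) = matS A.adjugate := by
    rw [← hφ',
      show A.adjugate = φ.mapMatrix M.adjugate from (RingHom.map_adjugate φ M).symm]
    simp [matS, map_sum, RingHom.mapMatrix_apply, Matrix.map_apply]
  have hSsum : PowerSeries.mk (fun n => ∑ i, ∑ j, (N ^ n) i j) = matS S := by
    refine PowerSeries.ext fun n => ?_
    simp [matS, hS, map_sum]
  calc ((M.det : ℚ[X]) : PowerSeries ℚ) * PowerSeries.mk (fun n => ∑ i, ∑ j, (N ^ n) i j)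
      = φ M.det * matS S := by rw [hφ', hSsum]
    _ = matS (φ M.det • S) := by
        simp [matS, Matrix.smul_apply, smul_eq_mul, Finset.mul_sum]
    _ = matS A.adjugate := by rw [hadj]
    _ = ((matS M.adjugate : ℚ[X]) : PowerSeries ℚ) := hms.symm

end Key

section Aux

lemma nat_card_sigma {β : Type*} [Fintype β] (f : β → Type*) [∀ i, Finite (f i)] :
    Nat.card (Σ i, f i) = ∑ i, Nat.card (f i) := by
  letI : ∀ i, Fintype (f i) := fun i => Fintype.ofFinite _
  simp [Nat.card_eq_fintype_card, Fintype.card_sigma]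

lemma cons_cs0 {m n : ℕ} (x : Fin m) (o : Fin (n + 1) → Fin m) :
    (Fin.cons (α := fun _ : Fin (n + 2) => Fin m) x o) ((0 : Fin (n + 1)).castSucc) = x := by
  rw [Fin.castSucc_zero]
  exact Fin.cons_zero (α := fun _ : Fin (n + 2) => Fin m) x o

lemma cons_succ' {m n : ℕ} (x : Fin m) (o : Fin (n + 1) → Fin m) (q : Fin (n + 1)) :
    (Fin.cons (α := fun _ : Fin (n + 2) => Fin m) x o) q.succ = o q :=
  Fin.cons_succ (α := fun _ : Fin (n + 2) => Fin m) x o q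

variable {m : ℕ} [Category (Fin m)]

theorem NondegChain.ext' {n : ℕ} {x y : Fin m} {c d : NondegChain m n x y}
    (h : c.obj = d.obj)
    (h2 : ∀ k : Fin n, c.hom k =
      eqToHom (congrFun h k.castSucc) ≫ d.hom k ≫ eqToHom (congrFun h k.succ).symm) :
    c = d := by
  obtain ⟨o1, f1, s1, t1, n1⟩ := c
  obtain ⟨o2, f2, s2, t2, n2⟩ := d
  dsimp at h
  subst h
  have : f1 = f2 := by
    funext k
    simpa using h2 k
  subst this
  rfl

/-- prepending a non-identity arrow to a chain -/
def consChain {n : ℕ} {x y k : Fin m}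
    (f : x ⟶ k) (_hf : ¬ ∃ h : x = k, f = eqToHom h) (d : NondegChain m n k y) :
    NondegChain m (n + 1) x y where
  obj := Fin.cons x d.obj
  hom := fun l => Fin.cases
    (motive := fun l : Fin (n + 1) =>
      (Fin.cons (α := fun _ : Fin (n + 2) => Fin m) x d.obj) l.castSucc ⟶
        (Fin.cons (α := fun _ : Fin (n + 2) => Fin m) x d.obj) l.succ)
    (eqToHom (cons_cs0 x d.obj) ≫ f ≫
      eqToHom ((cons_succ' x d.obj 0).trans d.src).symm)
    (fun q => eqToHom (cons_succ' x d.obj q.castSucc) ≫ d.hom q ≫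
      eqToHom (cons_succ' x d.obj q.succ).symm) l
  src := Fin.cons_zero (α := fun _ : Fin (n + 2) => Fin m) x d.obj
  tgt := (cons_succ' x d.obj (Fin.last n)).trans d.tgt
  nondeg := by
    intro l
    induction l using Fin.cases with
    | zero =>
      rintro ⟨h, e⟩
      simp only [Fin.cases_zero] at e
      refine _hf ⟨(cons_cs0 x d.obj).symm.trans
        (h.trans ((cons_succ' x d.obj 0).trans d.src)), ?_⟩
      have e2 : f = eqToHom (cons_cs0 x d.obj).symm ≫
          (eqToHom (cons_cs0 x d.obj) ≫ f ≫
            eqToHom ((cons_succ' x d.obj 0).trans d.src).symm) ≫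
          eqToHom ((cons_succ' x d.obj 0).trans d.src) := by
        simp only [Category.assoc, eqToHom_trans_assoc, eqToHom_trans, eqToHom_refl,
          Category.comp_id, Category.id_comp]
      rw [e2, e]
      simp only [Category.assoc, eqToHom_trans_assoc, eqToHom_trans, eqToHom_refl,
          Category.comp_id, Category.id_comp]
    | succ q =>
      rintro ⟨h, e⟩
      simp only [Fin.cases_succ] at e
      refine d.nondeg q ⟨(cons_succ' x d.obj q.castSucc).symm.trans
        (h.trans (cons_succ' x d.obj q.succ)), ?_⟩
      have e2 : d.hom q = eqToHom (cons_succ' x d.obj q.castSucc).symm ≫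
          (eqToHom (cons_succ' x d.obj q.castSucc) ≫ d.hom q ≫
            eqToHom (cons_succ' x d.obj q.succ).symm) ≫
          eqToHom (cons_succ' x d.obj q.succ) := by simp
      rw [e2, e]
      simp

@[simp] lemma consChain_obj {n : ℕ} {x y k : Fin m}
    (f : x ⟶ k) (hf : ¬ ∃ h : x = k, f = eqToHom h) (d : NondegChain m n k y) :
    (consChain f hf d).obj = Fin.cons x d.obj := rfl

@[simp] lemma consChain_hom_zero {n : ℕ} {x y k : Fin m}
    (f : x ⟶ k) (hf : ¬ ∃ h : x = k, f = eqToHom h) (d : NondegChain m n k y) :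
    (consChain f hf d).hom 0 = eqToHom (cons_cs0 x d.obj) ≫ f ≫
      eqToHom ((cons_succ' x d.obj 0).trans d.src).symm := by
  simp [consChain]
  rfl

@[simp] lemma consChain_hom_succ {n : ℕ} {x y k : Fin m}
    (f : x ⟶ k) (hf : ¬ ∃ h : x = k, f = eqToHom h) (d : NondegChain m n k y) (q : Fin n) :
    (consChain f hf d).hom q.succ = eqToHom (cons_succ' x d.obj q.castSucc) ≫ d.hom q ≫
      eqToHom (cons_succ' x d.obj q.succ).symm := by
  simp [consChain]
  rfl

variable [∀ i j : Fin m, Fintype (i ⟶ j)]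

instance {n : ℕ} {x y : Fin m} : Finite (NondegChain m n x y) := by
  apply Finite.of_injective
    (fun c : NondegChain m n x y =>
      (⟨c.obj, c.hom⟩ : Σ o : Fin (n + 1) → Fin m, ∀ k : Fin n, (o k.castSucc ⟶ o k.succ)))
  intro c d h
  obtain ⟨o1, f1, s1, t1, n1⟩ := c
  obtain ⟨o2, f2, s2, t2, n2⟩ := d
  dsimp at h
  obtain ⟨h1, h2⟩ := Sigma.mk.inj_iff.mp h
  subst h1
  have : f1 = f2 := eq_of_heq h2
  subst this
  rfl

/-- Counting non-identity arrows. -/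
lemma card_nonId (x y : Fin m) :
    (Nat.card {f : x ⟶ y // ¬ ∃ h : x = y, f = eqToHom h} : ℚ) =
      (Fintype.card (x ⟶ y) : ℚ) - if x = y then 1 else 0 := by
  classical
  by_cases h : x = y
  · subst h
    rw [if_pos rfl]
    have e : {f : x ⟶ x // ¬ ∃ h : x = x, f = eqToHom h} ≃ {f : x ⟶ x // ¬ f = 𝟙 x} :=
      Equiv.subtypeEquivRight (by intro f; simp)
    rw [Nat.card_congr e, Nat.card_eq_fintype_card, Fintype.card_subtype_compl,
      Fintype.card_subtype_eq]
    have hpos : 0 < Fintype.card (x ⟶ x) := Fintype.card_pos_iff.mpr ⟨𝟙 x⟩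
    rw [Nat.cast_sub hpos, Nat.cast_one]
  · rw [if_neg h]
    have e : {f : x ⟶ y // ¬ ∃ h' : x = y, f = eqToHom h'} ≃ (x ⟶ y) :=
      Equiv.subtypeUnivEquiv (by intro f; simp [h])
    rw [Nat.card_congr e, Nat.card_eq_fintype_card, sub_zero]

/-- zero-length chains -/
def chainZeroEquiv (x y : Fin m) : NondegChain m 0 x y ≃ PLift (x = y) where
  toFun c := ⟨by
    have h := c.tgt
    rw [show Fin.last 0 = 0 from rfl] at h
    exact c.src.symm.trans h⟩
  invFun h :=
    { obj := fun _ => x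
      hom := fun k => k.elim0
      src := rfl
      tgt := h.down
      nondeg := fun k => k.elim0 }
  left_inv c := by
    refine (NondegChain.ext' (c := c) ?_ ?_).symm
    · funext l
      rw [show l = 0 from Fin.fin_one_eq_zero l, c.src]
    · exact fun k => k.elim0
  right_inv h := Subsingleton.elim _ _

lemma card_chain_zero (x y : Fin m) :
    Nat.card (NondegChain m 0 x y) = if x = y then 1 else 0 := by
  rw [Nat.card_congr (chainZeroEquiv x y)]
  by_cases h : x = y <;> simp [h, Nat.card_eq_fintype_card]

/-- the fiber of the "second object" map on (n+1)-chains -/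
def chainSuccEquiv (n : ℕ) (x y k : Fin m) :
    {c : NondegChain m (n + 1) x y // c.obj ((0 : Fin (n + 1)).succ) = k} ≃
      ({f : x ⟶ k // ¬ ∃ h : x = k, f = eqToHom h} × NondegChain m n k y) where
  toFun c :=
    ⟨⟨eqToHom (show x = c.1.obj ((0 : Fin (n + 1)).castSucc) by
          rw [Fin.castSucc_zero, c.1.src]) ≫ c.1.hom 0 ≫ eqToHom c.2, by
        rintro ⟨h, e⟩
        refine c.1.nondeg 0 ⟨?_, ?_⟩
        · rw [Fin.castSucc_zero, c.1.src, c.2, ← h]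
        · have e2 : c.1.hom 0 =
              eqToHom (show c.1.obj ((0 : Fin (n + 1)).castSucc) = x by
                rw [Fin.castSucc_zero, c.1.src]) ≫
                (eqToHom (show x = c.1.obj ((0 : Fin (n + 1)).castSucc) by
                  rw [Fin.castSucc_zero, c.1.src]) ≫ c.1.hom 0 ≫ eqToHom c.2) ≫
                eqToHom c.2.symm := by
                  simp only [Category.assoc, eqToHom_trans_assoc, eqToHom_trans, eqToHom_refl,
                    Category.comp_id, Category.id_comp]
          rw [e2, e]
          simp only [Category.assoc, eqToHom_trans_assoc, eqToHom_trans, eqToHom_refl,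
            Category.comp_id, Category.id_comp]⟩,
      { obj := fun l => c.1.obj l.succ
        hom := fun l => c.1.hom l.succ
        src := c.2
        tgt := c.1.tgt
        nondeg := fun l => c.1.nondeg l.succ }⟩
  invFun p :=
    ⟨consChain p.1.1 p.1.2 p.2,
      (cons_succ' x p.2.obj 0).trans p.2.src⟩
  left_inv c := by
    apply Subtype.ext
    dsimp only
    refine NondegChain.ext' ?_ ?_
    · funext l
      induction l using Fin.cases with
      | zero => exact c.1.src.symm
      | succ q => simp
    · intro l
      induction l using Fin.cases with
      | zero => rw [consChain_hom_zero]; simp only [Category.assoc, eqToHom_trans_assoc, eqToHom_trans, eqToHom_refl, Category.comp_id, Category.id_comp]; rfl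
      | succ q => rw [consChain_hom_succ]; simp only [Category.assoc, eqToHom_trans_assoc, eqToHom_trans, eqToHom_refl, Category.comp_id, Category.id_comp]; rfl
  right_inv p := by
    dsimp only
    refine Prod.ext (Subtype.ext ?_) (NondegChain.ext' ?_ ?_)
    · have key : ∀ {a b : Fin m} (h1 : x = a) (h2 : a = x) (h3 : k = b) (h4 : b = k)
          (f : x ⟶ k), eqToHom h1 ≫ (eqToHom h2 ≫ f ≫ eqToHom h3) ≫ eqToHom h4 = f := by
        intros; subst_vars; simp
      exact key _ _ _ _ _
    · funext l
      simp
    · intro l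
      simp

lemma card_chain_succ (n : ℕ) (x y : Fin m) :
    (Nat.card (NondegChain m (n + 1) x y) : ℚ) =
      ∑ k : Fin m, (Nat.card {f : x ⟶ k // ¬ ∃ h : x = k, f = eqToHom h} : ℚ) *
        (Nat.card (NondegChain m n k y) : ℚ) := by
  classical
  rw [Nat.card_congr
    (Equiv.sigmaFiberEquiv (fun c : NondegChain m (n + 1) x y =>
      c.obj ((0 : Fin (n + 1)).succ))).symm]
  rw [nat_card_sigma]
  push_cast
  refine Finset.sum_congr rfl fun k _ => ?_
  rw [Nat.card_congr (chainSuccEquiv n x y k), Nat.card_prod]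
  push_cast
  ring

lemma pow_entry (n : ℕ) :
    ∀ x y : Fin m,
      (((Matrix.of fun i j : Fin m => (Fintype.card (i ⟶ j) : ℚ)) - 1) ^ n) x y =
        (Nat.card (NondegChain m n x y) : ℚ) := by
  induction n with
  | zero =>
    intro x y
    rw [pow_zero, card_chain_zero]
    by_cases h : x = y <;> simp [Matrix.one_apply, h]
  | succ n ih =>
    intro x y
    rw [pow_succ', Matrix.mul_apply, card_chain_succ]
    refine Finset.sum_congr rfl fun k _ => ?_
    rw [ih k y, Matrix.sub_apply, Matrix.one_apply, card_nonId, Matrix.of_apply]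

end Aux

theorem stmt2 (m : ℕ) [Category (Fin m)] [∀ i j : Fin m, Fintype (i ⟶ j)] :
    let Z : Matrix (Fin m) (Fin m) ℚ := Matrix.of fun i j => (Fintype.card (i ⟶ j) : ℚ)
    let c : ℕ → ℕ := fun n => ∑ i : Fin m, ∑ j : Fin m, Nat.card (NondegChain m n i j)
    let fA : PowerSeries ℚ := PowerSeries.mk fun n => (c n : ℚ)
    let D : ℚ[X] :=
      ((1 : Matrix (Fin m) (Fin m) ℚ[X]) - (X : ℚ[X]) • (Z - 1).map C).det
    ((D : PowerSeries ℚ) * fA =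
      ((matS (((1 : Matrix (Fin m) (Fin m) ℚ[X]) - (X : ℚ[X]) • (Z - 1).map C).adjugate) :
        ℚ[X]) : PowerSeries ℚ)) ∧
    D.coeff 0 = 1 ∧ D ≠ 0 := by
  intro Z c fA D
  have hfA : fA = PowerSeries.mk (fun n => ∑ i, ∑ j, ((Z - 1) ^ n) i j) := by
    refine PowerSeries.ext fun n => ?_
    simp only [fA, c, PowerSeries.coeff_mk]
    push_cast
    refine Finset.sum_congr rfl fun i _ => Finset.sum_congr rfl fun j _ => ?_
    exact (pow_entry n i j).symm
  have hcoeff : D.coeff 0 = 1 := key_det_coeff (Z - 1)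
  refine ⟨?_, hcoeff, ?_⟩
  · rw [hfA]
    exact key_main (Z - 1)
  · intro h
    rw [h] at hcoeff
    simp at hcoeff
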